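/- If σ is a density matrix and A is an operator with 0 ≤ A ≤ 1 such that Tr(Aσ) = 1, then √A σ √A = σ. -/

import Mathlib

open Matrix ComplexOrder
noncomputable def Matrix.PosSemidef.sqrt {n : Type*} [Fintype n] [DecidableEq n]
    {𝕜 : Type*} [RCLike 𝕜] {A : Matrix n n 𝕜} (hA : A.PosSemidef) : Matrix n n 𝕜 :=
  hA.1.eigenvectorUnitary.1 * diagonal ((↑) ∘ (√·) ∘ hA.1.eigenvalues) *
  (star hA.1.eigenvectorUnitary : Matrix n n 𝕜)

lemma Matrix.PosSemidef.posSemidef_sqrt {n : Type*} [Fintype n] [DecidableEq n]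
    {𝕜 : Type*} [RCLike 𝕜] {A : Matrix n n 𝕜} (hA : A.PosSemidef) : hA.sqrt.PosSemidef := by
  unfold Matrix.PosSemidef.sqrt
  have hD : (diagonal ((↑) ∘ (√·) ∘ hA.1.eigenvalues) : Matrix n n 𝕜).PosSemidef := by
    rw [posSemidef_diagonal_iff]
    intro i
    simp [Function.comp, Real.sqrt_nonneg]
  have := hD.mul_mul_conjTranspose_same (hA.1.eigenvectorUnitary : Matrix n n 𝕜)
  simpa [Unitary.coe_star, star_eq_conjTranspose] using this

lemma Matrix.PosSemidef.sqrt_mul_self {n : Type*} [Fintype n] [DecidableEq n]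
    {𝕜 : Type*} [RCLike 𝕜] {A : Matrix n n 𝕜} (hA : A.PosSemidef) : hA.sqrt * hA.sqrt = A := by
  unfold Matrix.PosSemidef.sqrt
  conv_rhs => rw [hA.1.spectral_theorem, Unitary.conjStarAlgAut_apply]
  have hU : (star hA.1.eigenvectorUnitary : Matrix n n 𝕜) * hA.1.eigenvectorUnitary.1 = 1 :=
    Unitary.coe_star_mul_self _
  have hD : (diagonal ((↑) ∘ (√·) ∘ hA.1.eigenvalues) : Matrix n n 𝕜) *
      diagonal ((↑) ∘ (√·) ∘ hA.1.eigenvalues) = diagonal (RCLike.ofReal ∘ hA.1.eigenvalues) := by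
    rw [diagonal_mul_diagonal]
    congr 1; funext i
    simp only [Function.comp]
    rw [← RCLike.ofReal_mul, Real.mul_self_sqrt (hA.eigenvalues_nonneg i)]
  calc _ = (hA.1.eigenvectorUnitary.1 * diagonal ((↑) ∘ (√·) ∘ hA.1.eigenvalues)) *
        ((star hA.1.eigenvectorUnitary : Matrix n n 𝕜) * hA.1.eigenvectorUnitary.1) *
        (diagonal ((↑) ∘ (√·) ∘ hA.1.eigenvalues) * (star hA.1.eigenvectorUnitary : Matrix n n 𝕜)) := by
          simp only [Matrix.mul_assoc]
    _ = _ := by rw [hU, Matrix.mul_one, Matrix.mul_assoc, ← Matrix.mul_assoc _ _ (star _ : Matrix n n 𝕜), hD, Matrix.mul_assoc]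

lemma aux_eq_zero_of_trace {n : ℕ} (B : Matrix (Fin n) (Fin n) ℂ)
    (h : (Bᴴ * B).trace = 0) : B = 0 := by
  have h' : ∑ j, ∑ i, Complex.normSq (B i j) = 0 := by
    have : ((∑ j, ∑ i, Complex.normSq (B i j) : ℝ) : ℂ) = 0 := by
      rw [← h]
      simp [Matrix.trace, Matrix.diag, Matrix.mul_apply, Matrix.conjTranspose_apply,
        Complex.normSq_eq_conj_mul_self]
    exact_mod_cast this
  ext i j
  have hj := (Finset.sum_eq_zero_iff_of_nonneg (fun j _ =>
    Finset.sum_nonneg fun i _ => Complex.normSq_nonneg _)).mp h' j (Finset.mem_univ j)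
  have hi := (Finset.sum_eq_zero_iff_of_nonneg (fun i _ =>
    Complex.normSq_nonneg _)).mp hj i (Finset.mem_univ i)
  simpa using Complex.normSq_eq_zero.mp hi

/-- If `σ` is a density matrix and `0 ≤ A ≤ 1` with `Tr(Aσ) = 1`,
then `√A σ √A = σ`. -/
theorem measurement_no_disturbance {n : ℕ} (σ A : Matrix (Fin n) (Fin n) ℂ)
    (hσ : σ.PosSemidef) (hσtr : σ.trace = 1)
    (hA : A.PosSemidef) (hA1 : ((1 : Matrix (Fin n) (Fin n) ℂ) - A).PosSemidef)
    (htr : (A * σ).trace = 1) :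
    hA.sqrt * σ * hA.sqrt = σ := by
  -- Tr((1-A)σ) = 0
  have htr0 : (((1 : Matrix (Fin n) (Fin n) ℂ) - A) * σ).trace = 0 := by
    rw [Matrix.sub_mul, Matrix.one_mul, Matrix.trace_sub, hσtr, htr, sub_self]
  set C := hA1.sqrt with hCdef
  set S := hσ.sqrt with hSdef
  have hCherm : Cᴴ = C := hA1.posSemidef_sqrt.1
  have hSherm : Sᴴ = S := hσ.posSemidef_sqrt.1
  -- √(1-A) √σ = 0
  have hCS : C * S = 0 := by
    apply aux_eq_zero_of_trace
    have : (C * S)ᴴ * (C * S) = S * (C * C * S) := by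
      rw [conjTranspose_mul, hCherm, hSherm]; simp only [Matrix.mul_assoc]
    rw [this, Matrix.trace_mul_comm]
    have hCC : C * C = (1 : Matrix (Fin n) (Fin n) ℂ) - A := hA1.sqrt_mul_self
    have hSS : S * S = σ := hσ.sqrt_mul_self
    calc (C * C * S * S).trace = (((1 : Matrix (Fin n) (Fin n) ℂ) - A) * σ).trace := by
          rw [Matrix.mul_assoc, hSS, hCC]
      _ = 0 := htr0
  -- (1 - A) σ = 0
  have hsub : ((1 : Matrix (Fin n) (Fin n) ℂ) - A) * σ = 0 := by
    have : ((1 : Matrix (Fin n) (Fin n) ℂ) - A) * σ = C * (C * S) * S := by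
      rw [← Matrix.mul_assoc, hA1.sqrt_mul_self, Matrix.mul_assoc, hσ.sqrt_mul_self]
    rw [this, hCS, Matrix.mul_zero, Matrix.zero_mul]
  -- (1 + √A)((1 - √A) σ) = 0
  have hkey : ((1 : Matrix (Fin n) (Fin n) ℂ) + hA.sqrt) *
      (((1 : Matrix (Fin n) (Fin n) ℂ) - hA.sqrt) * σ) = 0 := by
    have hexp : ((1 : Matrix (Fin n) (Fin n) ℂ) + hA.sqrt) *
        ((1 : Matrix (Fin n) (Fin n) ℂ) - hA.sqrt) = 1 - A := by
      have := hA.sqrt_mul_self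
      noncomm_ring [this]
    rw [← Matrix.mul_assoc, hexp, hsub]
  -- 1 + √A is positive definite, hence a unit
  have hpd : ((1 : Matrix (Fin n) (Fin n) ℂ) + hA.sqrt).PosDef :=
    Matrix.PosDef.add_posSemidef Matrix.PosDef.one hA.posSemidef_sqrt
  letI := hpd.isUnit.invertible
  have hfix : ((1 : Matrix (Fin n) (Fin n) ℂ) - hA.sqrt) * σ = 0 := by
    have := congrArg (fun X => ((1 : Matrix (Fin n) (Fin n) ℂ) + hA.sqrt)⁻¹ * X) hkey
    simpa [Matrix.inv_mul_cancel_left_of_invertible] using this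
  have h1 : hA.sqrt * σ = σ := by
    have := hfix
    rw [Matrix.sub_mul, Matrix.one_mul, sub_eq_zero] at this
    exact this.symm
  have h2 : σ * hA.sqrt = σ := by
    have := congrArg conjTranspose h1
    rwa [conjTranspose_mul, hA.posSemidef_sqrt.1, hσ.1] at this
  rw [h1, h2]
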